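/- Under any feasible joint distribution π, for π-almost every posterior mean x < θ*, the conditional distribution π_x over types is the point mass at x (i.e., the type x is fully revealed), where θ* is the unique crossing point of the cost function with the 45° line. -/

import Mathlib

open Set MeasureTheory

/-- Under any feasible joint distribution π, π-almost every posterior
mean x < θ* has its conditional distribution over types equal to the point mass at x:
equivalently, π puts no mass on pairs (θ,x) with x < θ* and θ ≠ x. -/
theorem means_below_cutoff_fully_revealed
    (f c : ℝ → ℝ) (θs : ℝ)
    (π : Measure (ℝ × ℝ)) [IsProbabilityMeasure π]
    (hf : Measurable f) (hfpos : ∀ θ ∈ Icc (0:ℝ) 1, 0 < f θ)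
    (hc_pos : ∀ θ ∈ Icc (0:ℝ) 1, 0 < c θ)
    (hc_mono : StrictMonoOn c (Icc (0:ℝ) 1))
    (hc_cont : ContinuousOn c (Icc (0:ℝ) 1))
    (hθs : θs ∈ Ioo (0:ℝ) 1)
    (hcross : c θs = θs)
    (hbelow : ∀ θ ∈ Ico (0:ℝ) θs, c θ > θ)
    (habove : ∀ θ ∈ Ioc θs 1, c θ < θ)
    -- feasibility of π
    (hsupp : π ((Icc (0:ℝ) 1 ×ˢ Icc (0:ℝ) 1)ᶜ) = 0)
    (hBP : Measure.map Prod.fst π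
      = (volume.restrict (Icc (0:ℝ) 1)).withDensity (fun θ => ENNReal.ofReal (f θ)))
    (hM : ∀ B : Set ℝ, MeasurableSet B →
      ∫ p in (univ : Set ℝ) ×ˢ B, (p.2 - p.1) ∂π = 0)
    (hPM : ∀ B : Set ℝ, MeasurableSet B →
      ∫ p in (univ : Set ℝ) ×ˢ B, (if min p.1 (c p.1) > p.2 then (1:ℝ) else 0) ∂π = 0) :
    π {p : ℝ × ℝ | p.2 < θs ∧ p.1 ≠ p.2} = 0 := by
  -- a.e. the point lies in [0,1]²
  have hsq : MeasurableSet (Icc (0:ℝ) 1 ×ˢ Icc (0:ℝ) 1) :=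
    (measurableSet_Icc).prod measurableSet_Icc
  have hae_supp : ∀ᵐ p ∂π, p ∈ Icc (0:ℝ) 1 ×ˢ Icc (0:ℝ) 1 := by
    rw [ae_iff]
    rw [show {p : ℝ × ℝ | ¬ p ∈ Icc (0:ℝ) 1 ×ˢ Icc (0:ℝ) 1} = (Icc (0:ℝ) 1 ×ˢ Icc (0:ℝ) 1)ᶜ from rfl]
    exact hsupp
  -- a continuous extension of c agreeing with c on [0,1]
  set c' : ℝ → ℝ := fun θ => c (max 0 (min 1 θ)) with hc'def
  have hc'cont : Continuous c' := by
    apply hc_cont.comp_continuous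
    · exact continuous_const.max (continuous_const.min continuous_id)
    · intro x
      constructor
      · exact le_max_left _ _
      · exact max_le (by norm_num) (min_le_left _ _)
  have hc'eq : ∀ θ ∈ Icc (0:ℝ) 1, c' θ = c θ := by
    intro θ hθ
    have : max 0 (min 1 θ) = θ := by
      rw [min_eq_right hθ.2, max_eq_right hθ.1]
    simp [hc'def, this]
  -- Step 1: from hPM with B = univ, a.e. min θ (c θ) ≤ x.
  have hPMu := hPM univ MeasurableSet.univ
  rw [Set.univ_prod_univ, Measure.restrict_univ] at hPMu
  set A' : Set (ℝ × ℝ) := {p : ℝ × ℝ | p.2 < min p.1 (c' p.1)} with hA'def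
  have hA'meas : MeasurableSet A' :=
    measurableSet_lt measurable_snd
      ((measurable_fst.min (hc'cont.measurable.comp measurable_fst)))
  have hcongr : (fun p : ℝ × ℝ => if min p.1 (c p.1) > p.2 then (1:ℝ) else 0)
      =ᵐ[π] A'.indicator (fun _ => (1:ℝ)) := by
    filter_upwards [hae_supp] with p hp
    have h1 : c' p.1 = c p.1 := hc'eq p.1 hp.1
    by_cases h : p.2 < min p.1 (c p.1)
    · rw [if_pos h, Set.indicator_of_mem (by simpa [hA'def, h1] using h)]
    · rw [if_neg h, Set.indicator_of_notMem (by simpa [hA'def, h1] using h)]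
  have hint : ∫ p, A'.indicator (fun _ => (1:ℝ)) p ∂π = 0 := by
    rw [← integral_congr_ae hcongr]; exact hPMu
  have hA'zero : π A' = 0 := by
    rw [integral_indicator_const (1:ℝ) hA'meas, smul_eq_mul, mul_one] at hint
    exact (ENNReal.toReal_eq_zero_iff _).mp hint |>.resolve_right (measure_ne_top π A')
  have hae_min : ∀ᵐ p ∂π, ¬ (p.2 < min p.1 (c' p.1)) := by
    rw [ae_iff]
    simpa [hA'def] using hA'zero
  -- Step 2: a.e., x < θs → θ ≤ x
  have hkey : ∀ᵐ p ∂π, p.2 < θs → p.1 ≤ p.2 := by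
    filter_upwards [hae_supp, hae_min] with p hp hmin hx
    have h1 : c' p.1 = c p.1 := hc'eq p.1 hp.1
    push_neg at hmin
    rw [h1] at hmin
    by_cases hlt : p.1 < θs
    · have hcθ : c p.1 > p.1 := hbelow p.1 ⟨hp.1.1, hlt⟩
      have : min p.1 (c p.1) = p.1 := min_eq_left hcθ.le
      linarith [this ▸ hmin]
    · push_neg at hlt
      have hcθ : θs ≤ c p.1 := by
        rcases eq_or_lt_of_le hlt with h | h
        · rw [← h, hcross]
        · exact le_of_lt (hcross ▸ hc_mono ⟨hθs.1.le, hθs.2.le⟩ hp.1 h)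
      have : θs ≤ min p.1 (c p.1) := le_min hlt hcθ
      linarith
  -- Step 3: martingale on B = Iio θs
  have hS : MeasurableSet ((univ : Set ℝ) ×ˢ Iio θs) :=
    MeasurableSet.univ.prod measurableSet_Iio
  set ν := π.restrict ((univ : Set ℝ) ×ˢ Iio θs) with hνdef
  have hMν := hM (Iio θs) measurableSet_Iio
  have hnonneg : 0 ≤ᵐ[ν] fun p : ℝ × ℝ => p.2 - p.1 := by
    have h1 : ∀ᵐ p ∂ν, p ∈ (univ : Set ℝ) ×ˢ Iio θs := ae_restrict_mem hS
    have h2 : ∀ᵐ p ∂ν, p.2 < θs → p.1 ≤ p.2 := ae_restrict_of_ae hkey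
    filter_upwards [h1, h2] with p hp hk
    have := hk hp.2
    simp only [Pi.zero_apply]
    linarith
  have hintg : Integrable (fun p : ℝ × ℝ => p.2 - p.1) ν := by
    refine Integrable.mono' (integrable_const (1:ℝ))
      ((measurable_snd.sub measurable_fst).aestronglyMeasurable) ?_
    have h3 : ∀ᵐ p ∂ν, p ∈ Icc (0:ℝ) 1 ×ˢ Icc (0:ℝ) 1 := ae_restrict_of_ae hae_supp
    filter_upwards [h3] with p hp
    rw [Real.norm_eq_abs, abs_sub_le_iff]
    constructor <;> [linarith [hp.1.1, hp.1.2, hp.2.1, hp.2.2];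
      linarith [hp.1.1, hp.1.2, hp.2.1, hp.2.2]]
  have heqz : (fun p : ℝ × ℝ => p.2 - p.1) =ᵐ[ν] 0 :=
    ((integral_eq_zero_iff_of_nonneg_ae hnonneg hintg).mp hMν)
  have hν0 : ν {p : ℝ × ℝ | p.1 ≠ p.2} = 0 := by
    rw [← ae_iff] at *
    filter_upwards [heqz] with p hp
    simp only [Pi.zero_apply] at hp
    linarith
  refine le_antisymm ?_ zero_le
  calc π {p : ℝ × ℝ | p.2 < θs ∧ p.1 ≠ p.2}
      = π ({p : ℝ × ℝ | p.2 < θs ∧ p.1 ≠ p.2} ∩ (univ : Set ℝ) ×ˢ Iio θs) := by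
        congr 1; ext p; simp (config := {contextual := true}) [and_comm]
    _ = ν ({p : ℝ × ℝ | p.2 < θs ∧ p.1 ≠ p.2}) := (Measure.restrict_apply' hS).symm
    _ ≤ ν {p : ℝ × ℝ | p.1 ≠ p.2} := measure_mono fun p hp => hp.2
    _ = 0 := hν0
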